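/- Let n and d be positive integers and let F : F_{2^n} → F_{2^n} be defined by F(x) = x^{2^d + 1} (a Gold exponent). Then F is 0-APN if and only if gcd(d, n) = 1. -/

import Mathlib

open scoped Classical

noncomputable instance (n : ℕ) : Fintype (GaloisField 2 n) := Fintype.ofFinite _

/-- The absolute trace of `F_{2^n}` over `F_2`. -/
noncomputable def fieldTr (n : ℕ) (x : GaloisField 2 n) : ZMod 2 :=
  Algebra.trace (ZMod 2) (GaloisField 2 n) x

/-- `(-1)^{Tr(x)}` as an integer. -/
noncomputable def chi (n : ℕ) (x : GaloisField 2 n) : ℤ :=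
  (-1) ^ (fieldTr n x).val

/-- The Walsh transform `W_F(a,b)`. -/
noncomputable def walsh (n : ℕ) (F : GaloisField 2 n → GaloisField 2 n)
    (a b : GaloisField 2 n) : ℤ :=
  ∑ x : GaloisField 2 n, chi n (b * F x + a * x)

/-- `F` is almost perfect nonlinear. -/
def IsAPN (n : ℕ) (F : GaloisField 2 n → GaloisField 2 n) : Prop :=
  ∀ a b : GaloisField 2 n, a ≠ 0 →
    Nat.card {x : GaloisField 2 n // F (x + a) + F x = b} ≤ 2

/-- `F` is partially APN at the point `x₀`. -/
def IsPAPN (n : ℕ) (F : GaloisField 2 n → GaloisField 2 n) (x₀ : GaloisField 2 n) : Prop :=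
  ∀ u v : GaloisField 2 n, F x₀ + F u + F v + F (x₀ + u + v) = 0 →
    (x₀ + u) * (x₀ + v) * (u + v) = 0

/-- The `(x₀, ε)`-modification of `F`. -/
noncomputable
def pointModify (n : ℕ) (F : GaloisField 2 n → GaloisField 2 n) (x₀ ε : GaloisField 2 n) :
    GaloisField 2 n → GaloisField 2 n :=
  fun x => if x = x₀ then F x₀ + ε else F x

/-- `E_F(a,b) = (-1)^{Tr(a x₀ + b y₀)} (1 - (-1)^{Tr(b ε)})`. -/
noncomputable def EF (n : ℕ) (F : GaloisField 2 n → GaloisField 2 n)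
    (x₀ ε a b : GaloisField 2 n) : ℤ :=
  chi n (a * x₀ + b * F x₀) * (1 - chi n (b * ε))

lemma aux_order (d n m : ℕ) (hd : 0 < d) (hn : 0 < n) (h1 : Nat.gcd d n = 1)
    (hmd : m ∣ 2 ^ d - 1) (hmn : m ∣ 2 ^ n - 1) : m = 1 := by
  have hA : 1 ≤ 2 ^ d := Nat.one_le_two_pow
  have hB : 1 ≤ 2 ^ n := Nat.one_le_two_pow
  have hodd : ¬ 2 ∣ m := by
    intro h2
    have h3 : (2:ℕ) ∣ 2 ^ d - 1 := h2.trans hmd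
    have hev : (2:ℕ) ∣ 2 ^ d := dvd_pow_self 2 hd.ne'
    have : (2:ℕ) ∣ 2 ^ d - (2 ^ d - 1) := Nat.dvd_sub hev h3
    rw [show 2 ^ d - (2 ^ d - 1) = 1 by omega] at this
    omega
  have hcop : Nat.Coprime 2 m := (Nat.prime_two.coprime_iff_not_dvd).mpr hodd
  set u2 : (ZMod m)ˣ := ZMod.unitOfCoprime 2 hcop with hu2
  have key : ∀ k : ℕ, 0 < k → m ∣ 2 ^ k - 1 → u2 ^ k = 1 := by
    intro k hk hmk
    have hk1 : 1 ≤ 2 ^ k := Nat.one_le_two_pow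
    have h : ((2 ^ k - 1 : ℕ) : ZMod m) = 0 :=
      (ZMod.natCast_eq_zero_iff _ _).mpr hmk
    have e : (2 ^ k : ℕ) = (2 ^ k - 1) + 1 := by omega
    have h2 : ((2 : ZMod m)) ^ k = 1 := by
      calc (2:ZMod m)^k = ((2^k : ℕ) : ZMod m) := by push_cast; ring
      _ = ((2^k - 1 : ℕ) : ZMod m) + 1 := by rw [e]; push_cast; ring
      _ = 1 := by rw [h]; ring
    ext
    rw [hu2]
    push_cast [ZMod.coe_unitOfCoprime]
    simpa using h2
  have hdvd : orderOf u2 ∣ Nat.gcd d n :=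
    Nat.dvd_gcd (orderOf_dvd_of_pow_eq_one (key d hd hmd))
      (orderOf_dvd_of_pow_eq_one (key n hn hmn))
  rw [h1, Nat.dvd_one] at hdvd
  have : u2 = 1 := orderOf_eq_one_iff.mp hdvd
  have h2 : (2 : ZMod m) = 1 := by
    have hc := ZMod.coe_unitOfCoprime 2 hcop
    rw [← hu2, this] at hc
    simpa using hc.symm
  have h3 : ((1:ℕ) : ZMod m) = 0 := by push_cast; linear_combination h2
  have := (ZMod.natCast_eq_zero_iff 1 m).mp h3
  exact Nat.dvd_one.mp this

theorem papn_of_gold (n d : ℕ) (hn : 0 < n) (hd : 0 < d) :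
    IsPAPN n (fun x : GaloisField 2 n => x ^ (2 ^ d + 1)) 0 ↔ Nat.gcd d n = 1 := by
  set K := GaloisField 2 n with hK
  have h2K : (2 : K) = 0 := CharTwo.two_eq_zero
  have hA1 : 1 ≤ 2 ^ d := Nat.one_le_two_pow
  have hB1 : 1 ≤ 2 ^ n := Nat.one_le_two_pow
  -- the key algebraic identity in characteristic two
  have key : ∀ u v : K, u ^ (2^d + 1) + v ^ (2^d + 1) + (u + v) ^ (2^d + 1)
      = u ^ (2^d) * v + u * v ^ (2^d) := by
    intro u v
    rw [pow_succ, pow_succ, pow_succ, add_pow_char_pow]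
    linear_combination (u ^ (2^d) * u + v ^ (2^d) * v) * h2K
  have hcardU : Fintype.card Kˣ = 2 ^ n - 1 := by
    rw [Fintype.card_units, ← GaloisField.card 2 n hn.ne', Nat.card_eq_fintype_card]
  constructor
  · -- 0-APN implies gcd = 1
    intro h
    by_contra hg
    set g := Nat.gcd d n with hgdef
    have hgpos : 0 < g := Nat.gcd_pos_of_pos_left n hd
    have hg2 : 2 ≤ g := by omega
    have hm2 : 2 ≤ 2 ^ g - 1 := by
      have : 2 ^ 2 ≤ 2 ^ g := Nat.pow_le_pow_right (by norm_num) hg2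
      omega
    have hdvd : ∀ k : ℕ, g ∣ k → 2 ^ g - 1 ∣ 2 ^ k - 1 := by
      intro k hk
      obtain ⟨c, rfl⟩ := hk
      simpa [← pow_mul, one_pow] using Nat.sub_dvd_pow_sub_pow (2 ^ g) 1 c
    have hmd : 2 ^ g - 1 ∣ 2 ^ d - 1 := hdvd d (Nat.gcd_dvd_left d n)
    have hmn : 2 ^ g - 1 ∣ 2 ^ n - 1 := hdvd n (Nat.gcd_dvd_right d n)
    -- get an element of order 2^g - 1 in Kˣ
    obtain ⟨ζ, hζ⟩ := IsCyclic.exists_generator (α := Kˣ)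
    have hord : orderOf ζ = 2 ^ n - 1 := by
      rw [orderOf_eq_card_of_forall_mem_zpowers hζ, Nat.card_eq_fintype_card, hcardU]
    have hB2 : 2 ≤ 2 ^ n := by
      calc (2:ℕ) = 2 ^ 1 := rfl
      _ ≤ 2 ^ n := Nat.pow_le_pow_right (by norm_num) hn
    have hordne : orderOf ζ ≠ 0 := by rw [hord]; omega
    have hmdvd : (2 ^ g - 1) ∣ orderOf ζ := by rw [hord]; exact hmn
    set t : Kˣ := ζ ^ (orderOf ζ / (2 ^ g - 1)) with ht
    have hordt : orderOf t = 2 ^ g - 1 := orderOf_pow_orderOf_div hordne hmdvd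
    have htpow : (t : K) ^ (2 ^ d - 1) = 1 := by
      have : t ^ (2 ^ d - 1) = 1 := by
        apply orderOf_dvd_iff_pow_eq_one.mp
        rw [hordt]; exact hmd
      simpa using congrArg (Units.val) this
    have ht1 : (t : K) ≠ 1 := by
      intro hcon
      have : t = 1 := Units.ext (by simpa using hcon)
      rw [← orderOf_eq_one_iff.mpr this] at hm2
      omega
    have htK : (t : K) ^ (2 ^ d) = (t : K) := by
      conv_lhs => rw [show 2 ^ d = (2 ^ d - 1) + 1 by omega]
      rw [pow_succ, htpow, one_mul]
    -- apply the 0-APN hypothesis at (t, 1)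
    have := h (t : K) 1 ?_
    · simp only [zero_add, one_mul] at this
      rcases mul_eq_zero.mp this with h' | h'
      · rcases mul_eq_zero.mp h' with h'' | h''
        · exact t.ne_zero h''
        · exact one_ne_zero h''
      · apply ht1
        have : (t : K) = -1 := by linear_combination h'
        rw [this]; linear_combination -h2K
    · simp only [zero_add]
      have h0 : (0 : K) ^ (2 ^ d + 1) = 0 := zero_pow (by omega)
      rw [h0, zero_add, key, htK]
      simp only [one_pow, mul_one]
      linear_combination (t : K) * h2K
  · -- gcd = 1 implies 0-APN
    intro h1 u v heq
    simp only [zero_add] at heq ⊢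
    have h0 : (0 : K) ^ (2 ^ d + 1) = 0 := zero_pow (by omega)
    rw [h0, zero_add, key] at heq
    by_contra hcon
    have hu : u ≠ 0 := fun h' => hcon (by rw [h']; ring)
    have hv : v ≠ 0 := fun h' => hcon (by rw [h']; ring)
    have huv : u + v ≠ 0 := fun h' => hcon (by rw [h']; ring)
    -- deduce u^(2^d-1) = v^(2^d-1)
    have hpow : u ^ (2 ^ d - 1) = v ^ (2 ^ d - 1) := by
      have e : (2:ℕ) ^ d = (2 ^ d - 1) + 1 := by omega
      rw [e] at heq
      have h2 : u ^ (2 ^ d - 1) * (u * v) = v ^ (2 ^ d - 1) * (u * v) := by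
        rw [pow_succ, pow_succ] at heq
        linear_combination heq - (u * v ^ (2^d-1) * v) * h2K
      exact mul_right_cancel₀ (mul_ne_zero hu hv) h2
    set a : Kˣ := Units.mk0 u hu with ha
    set b : Kˣ := Units.mk0 v hv with hb
    have htm : (a * b⁻¹) ^ (2 ^ d - 1) = 1 := by
      have hab : a ^ (2 ^ d - 1) = b ^ (2 ^ d - 1) := Units.ext (by
        push_cast [ha, hb]; exact hpow)
      rw [mul_pow, inv_pow, hab]
      simp
    have hd1 : orderOf (a * b⁻¹) ∣ 2 ^ d - 1 := orderOf_dvd_iff_pow_eq_one.mpr htm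
    have hd2 : orderOf (a * b⁻¹) ∣ 2 ^ n - 1 := by
      rw [← hcardU]; exact orderOf_dvd_card
    have := aux_order d n (orderOf (a * b⁻¹)) hd hn h1 hd1 hd2
    have hab1 : a * b⁻¹ = 1 := orderOf_eq_one_iff.mp this
    have : a = b := by
      have := congrArg (· * b) hab1
      simpa [mul_assoc] using this
    have huv2 : u = v := by
      have := congrArg Units.val this
      simpa [ha, hb] using this
    apply huv
    rw [huv2]
    linear_combination v * h2K
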